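/- For α > 0, r > 0, h > 0, and integer d ≥ 1, the double time integral ∫_{dh}^{(d+1)h} ∫_0^h (4πα(t−τ))^{−3/2} exp(−r²/(4α(t−τ))) dτ dt equals 2·G^{dτdt}_α(r, dh) − G^{dτdt}_α(r, (d+1)h) − G^{dτdt}_α(r, (d−1)h), where G^{dτdt}_α(r,δ) := (1/(4π)) [ (r/(2α²) + δ/(α r)) erf(r/(2√(αδ))) + (√δ/√(πα³)) exp(−r²/(4αδ)) ] for δ > 0, extended at δ = 0 by its limit r/(8πα²). -/

import Mathlib

open Real Filter Set
open MeasureTheory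

noncomputable def erf (x : ℝ) : ℝ := (2 / Real.sqrt π) * ∫ t in (0:ℝ)..x, Real.exp (-t^2)

/-- The twice time-integrated heat kernel `G^{dτdt}_α(r,δ)`, extended at `δ = 0` by its
limit `r/(8πα²)`. -/
noncomputable def Gdtdt (α r δ : ℝ) : ℝ :=
  if δ = 0 then r / (8 * π * α^2)
  else (1 / (4 * π)) *
    ((r / (2 * α^2) + δ / (α * r)) * erf (r / (2 * Real.sqrt (α * δ)))
      + Real.sqrt δ / Real.sqrt (π * α^3) * Real.exp (-r^2 / (4 * α * δ)))

lemma gauss_cont : Continuous (fun t : ℝ => Real.exp (-t^2)) := by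
  continuity

lemma gauss_integrableOn : IntegrableOn (fun t : ℝ => Real.exp (-t^2)) (Ioi 0) := by
  have := (integrable_exp_neg_mul_sq (b := 1) one_pos).integrableOn (s := Ioi 0)
  simpa using this

lemma erf_hasDerivAt (x : ℝ) :
    HasDerivAt erf (2 / Real.sqrt π * Real.exp (-x^2)) x := by
  have h1 : HasDerivAt (fun u => ∫ t in (0:ℝ)..u, Real.exp (-t^2)) (Real.exp (-x^2)) x :=
    intervalIntegral.integral_hasDerivAt_right
      (gauss_cont.intervalIntegrable _ _)
      (gauss_cont.stronglyMeasurableAtFilter _ _)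
      gauss_cont.continuousAt
  exact h1.const_mul (2 / Real.sqrt π)

lemma erf_nonneg {x : ℝ} (hx : 0 ≤ x) : 0 ≤ erf x := by
  apply mul_nonneg (by positivity)
  exact intervalIntegral.integral_nonneg hx (fun t _ => (Real.exp_pos _).le)

lemma erf_le_one {x : ℝ} (hx : 0 ≤ x) : erf x ≤ 1 := by
  have h1 : (∫ t in (0:ℝ)..x, Real.exp (-t^2)) ≤ ∫ t in Ioi (0:ℝ), Real.exp (-t^2) := by
    rw [intervalIntegral.integral_of_le hx]
    exact setIntegral_mono_set gauss_integrableOn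
      (Filter.Eventually.of_forall fun t => (Real.exp_pos _).le)
      (Filter.Eventually.of_forall Ioc_subset_Ioi_self)
  have h2 : (∫ t in Ioi (0:ℝ), Real.exp (-t^2)) = Real.sqrt π / 2 := by
    have := integral_gaussian_Ioi 1
    simpa using this
  have hπ : (0:ℝ) < Real.sqrt π := Real.sqrt_pos.mpr Real.pi_pos
  calc erf x ≤ (2 / Real.sqrt π) * (Real.sqrt π / 2) := by
        apply mul_le_mul_of_nonneg_left (h1.trans_eq h2) (by positivity)
    _ = 1 := by field_simp

lemma tendsto_erf_atTop : Tendsto erf atTop (nhds 1) := by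
  have h1 : Tendsto (fun x : ℝ => ∫ t in (0:ℝ)..x, Real.exp (-t^2)) atTop
      (nhds (∫ t in Ioi (0:ℝ), Real.exp (-t^2))) :=
    intervalIntegral_tendsto_integral_Ioi 0 gauss_integrableOn tendsto_id
  have h2 : (∫ t in Ioi (0:ℝ), Real.exp (-t^2)) = Real.sqrt π / 2 := by
    simpa using integral_gaussian_Ioi 1
  have hπ : (0:ℝ) < Real.sqrt π := Real.sqrt_pos.mpr Real.pi_pos
  have := h1.const_mul (2 / Real.sqrt π)
  rw [h2] at this
  have he : (2 / Real.sqrt π) * (Real.sqrt π / 2) = 1 := by field_simp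
  rw [he] at this
  exact this

lemma erf_zero : erf 0 = 0 := by simp [erf]

noncomputable def Gdt (α r δ : ℝ) : ℝ :=
  (1 / (4 * π * α * r)) * erf (r / (2 * Real.sqrt (α * δ)))

-- derivative of the erf argument
lemma arg_hasDerivAt {α r δ : ℝ} (hα : 0 < α) (hδ : 0 < δ) :
    HasDerivAt (fun δ => r / (2 * Real.sqrt (α * δ)))
      (-(r * α) / (4 * (α*δ) * Real.sqrt (α*δ))) δ := by
  have hαδ : 0 < α * δ := mul_pos hα hδ
  have hs : 0 < Real.sqrt (α * δ) := Real.sqrt_pos.mpr hαδ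
  have h1 : HasDerivAt (fun δ : ℝ => Real.sqrt (α * δ)) (1 / (2 * Real.sqrt (α * δ)) * α) δ := by
    have h := (Real.hasDerivAt_sqrt (x := α * δ) (ne_of_gt hαδ)).comp δ
      ((hasDerivAt_id δ).const_mul α)
    rw [mul_one] at h; exact h
  have h2 : HasDerivAt (fun δ : ℝ => 2 * Real.sqrt (α * δ)) (2 * (1 / (2 * Real.sqrt (α * δ)) * α)) δ :=
    h1.const_mul 2
  have h3 := (hasDerivAt_const δ r).div h2 (by positivity)
  refine h3.congr_deriv (Eq.symm ?_)
  rw [mul_pow, Real.sq_sqrt hαδ.le]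
  field_simp
  ring

lemma rpow_neg_three_half {x : ℝ} (hx : 0 < x) :
    x ^ (-(3:ℝ)/2) = 1 / (x * Real.sqrt x) := by
  rw [show (-(3:ℝ)/2) = -(3/2) by ring, Real.rpow_neg hx.le,
    show (3:ℝ)/2 = 1 + 1/2 by norm_num, Real.rpow_add hx, Real.rpow_one,
    ← Real.sqrt_eq_rpow, one_div]

lemma Gdt_hasDerivAt {α r δ : ℝ} (hα : 0 < α) (hr : 0 < r) (hδ : 0 < δ) :
    HasDerivAt (Gdt α r)
      (-((4*π*α*δ) ^ (-(3:ℝ)/2) * Real.exp (-r^2/(4*α*δ)))) δ := by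
  have hαδ : 0 < α * δ := mul_pos hα hδ
  have hs : 0 < Real.sqrt (α * δ) := Real.sqrt_pos.mpr hαδ
  have hsπ : (0:ℝ) < Real.sqrt π := Real.sqrt_pos.mpr Real.pi_pos
  have harg := arg_hasDerivAt (r := r) hα hδ
  have herf := erf_hasDerivAt (r / (2 * Real.sqrt (α*δ)))
  have h := (herf.comp δ harg).const_mul (1/(4*π*α*r))
  have hfun : (fun δ => (1/(4*π*α*r)) * erf (r / (2 * Real.sqrt (α*δ)))) = Gdt α r := by
    funext x; simp [Gdt]
  rw [show ((fun x => erf x) ∘ fun δ => r / (2 * Real.sqrt (α * δ)))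
      = fun δ => erf (r / (2 * Real.sqrt (α*δ))) from rfl] at h
  rw [hfun] at h
  refine h.congr_deriv (Eq.symm ?_)
  have hargsq : (r / (2 * Real.sqrt (α*δ)))^2 = r^2/(4*(α*δ)) := by
    rw [div_pow, mul_pow, Real.sq_sqrt hαδ.le]; norm_num
  rw [hargsq, rpow_neg_three_half (by positivity),
    show (4*π*α*δ) = 2^2*(π*(α*δ)) by ring,
    Real.sqrt_mul (by positivity), Real.sqrt_sq (by norm_num),
    Real.sqrt_mul Real.pi_pos.le, Real.sqrt_mul hα.le]
  rw [Real.sqrt_mul hα.le] at hs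
  have hsa : (0:ℝ) < Real.sqrt α := Real.sqrt_pos.mpr hα
  have hsd : (0:ℝ) < Real.sqrt δ := Real.sqrt_pos.mpr hδ
  have e1 : Real.sqrt α * Real.sqrt α = α := Real.mul_self_sqrt hα.le
  have e2 : Real.sqrt δ * Real.sqrt δ = δ := Real.mul_self_sqrt hδ.le
  have e3 : Real.sqrt π * Real.sqrt π = π := Real.mul_self_sqrt Real.pi_pos.le
  have hE : Real.exp (-(r^2/(4*(α*δ)))) = Real.exp (-r^2/(4*α*δ)) := by
    congr 1; ring
  rw [hE]
  field_simp
  nlinarith [e1, e2, e3, Real.exp_pos (-r^2/(4*α*δ)), hsa, hsd, hsπ]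

lemma sqrt_pi_alpha_cube {α : ℝ} (hα : 0 < α) :
    Real.sqrt (π * α^3) = Real.sqrt π * (α * Real.sqrt α) := by
  rw [Real.sqrt_mul Real.pi_pos.le, show α^3 = α^2 * α by ring,
    Real.sqrt_mul (sq_nonneg α), Real.sqrt_sq hα.le]

lemma Gdtdt_hasDerivAt {α r δ : ℝ} (hα : 0 < α) (hr : 0 < r) (hδ : 0 < δ) :
    HasDerivAt (Gdtdt α r) (Gdt α r δ) δ := by
  have hαδ : 0 < α * δ := mul_pos hα hδ
  have hs : 0 < Real.sqrt (α * δ) := Real.sqrt_pos.mpr hαδ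
  have hsπ : (0:ℝ) < Real.sqrt π := Real.sqrt_pos.mpr Real.pi_pos
  have hsa : (0:ℝ) < Real.sqrt α := Real.sqrt_pos.mpr hα
  have hsd : (0:ℝ) < Real.sqrt δ := Real.sqrt_pos.mpr hδ
  have hA : HasDerivAt (fun x : ℝ => r/(2*α^2) + x/(α*r)) (1/(α*r)) δ := by
    simpa using ((hasDerivAt_id δ).div_const (α*r)).const_add (r/(2*α^2))
  have harg := arg_hasDerivAt (r := r) hα hδ
  have herf' := (erf_hasDerivAt (r / (2 * Real.sqrt (α*δ)))).comp δ harg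
  have hW := hA.mul herf'
  have hsd' : HasDerivAt (fun x : ℝ => Real.sqrt x) (1/(2*Real.sqrt δ)) δ :=
    Real.hasDerivAt_sqrt hδ.ne'
  have hinv : HasDerivAt (fun x : ℝ => -r^2/(4*α) * x⁻¹) (-r^2/(4*α) * (-(δ^2)⁻¹)) δ :=
    (hasDerivAt_inv hδ.ne').const_mul _
  have hgeq : (fun x : ℝ => -r^2/(4*α) * x⁻¹) = fun x : ℝ => -r^2/(4*α*x) := by
    funext x
    rcases eq_or_ne x 0 with h | h
    · simp [h]
    · field_simp
  rw [hgeq] at hinv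
  have hE := hinv.exp
  have hB := (hsd'.div_const (Real.sqrt (π*α^3))).mul hE
  have hH := (hW.add hB).const_mul (1/(4*π))
  have hev : Gdtdt α r =ᶠ[nhds δ] (fun x =>
      (1/(4*π)) * ((r/(2*α^2) + x/(α*r)) * ((fun x => erf x) ∘ fun δ => r / (2 * Real.sqrt (α * δ))) x
        + (fun x => Real.sqrt x) x / Real.sqrt (π*α^3) * Real.exp (-r^2/(4*α*x)))) := by
    filter_upwards [eventually_ne_nhds hδ.ne'] with x hx
    simp [Gdtdt, hx, Function.comp]
  refine (hH.congr_of_eventuallyEq hev).congr_deriv ?_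
  -- now prove the derivative value equals Gdt α r δ
  have hargsq : (r / (2 * Real.sqrt (α*δ)))^2 = r^2/(4*(α*δ)) := by
    rw [div_pow, mul_pow, Real.sq_sqrt hαδ.le]; norm_num
  have e1 : Real.sqrt α * Real.sqrt α = α := Real.mul_self_sqrt hα.le
  have e2 : Real.sqrt δ * Real.sqrt δ = δ := Real.mul_self_sqrt hδ.le
  have e3 : Real.sqrt π * Real.sqrt π = π := Real.mul_self_sqrt Real.pi_pos.le
  have hEarg : -(r^2/(4*(α*δ))) = -r^2/(4*α*δ) := by ring
  simp only [Function.comp_apply]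
  rw [Gdt, hargsq, hEarg, sqrt_pi_alpha_cube hα, Real.sqrt_mul hα.le]
  set W := erf (r / (2 * Real.sqrt (α*δ))) with hWdef
  set E := Real.exp (-r^2/(4*α*δ)) with hEdef
  rw [← e1, ← e2, ← e3]
  have p2 : Real.sqrt δ ^ 2 = δ := Real.sq_sqrt hδ.le
  field_simp
  have q2 : Real.sqrt (Real.sqrt δ ^ 2) ^ 2 = Real.sqrt δ ^ 2 := Real.sq_sqrt (by positivity)
  linear_combination (2 * r^3 * E) * q2

lemma erf_continuous : Continuous erf :=
  continuous_iff_continuousAt.mpr fun x => (erf_hasDerivAt x).continuousAt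

lemma Gdtdt_zero (α r : ℝ) : Gdtdt α r 0 = r / (8 * π * α^2) := by simp [Gdtdt]

lemma Gdtdt_tendsto_zero {α r : ℝ} (hα : 0 < α) (hr : 0 < r) :
    Tendsto (Gdtdt α r) (nhdsWithin 0 (Ioi 0)) (nhds (r / (8 * π * α^2))) := by
  have hsπ : (0:ℝ) < Real.sqrt π := Real.sqrt_pos.mpr Real.pi_pos
  have T2a : Tendsto (fun δ : ℝ => r / (2 * Real.sqrt (α * δ))) (nhdsWithin 0 (Ioi 0)) atTop := by
    have hg : Tendsto (fun δ : ℝ => 2 * Real.sqrt (α * δ)) (nhdsWithin 0 (Ioi 0))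
        (nhdsWithin 0 (Ioi 0)) := by
      rw [tendsto_nhdsWithin_iff]
      constructor
      · have hc : Continuous (fun δ : ℝ => 2 * Real.sqrt (α * δ)) := by continuity
        have := (hc.tendsto 0).mono_left (nhdsWithin_le_nhds (s := Ioi 0))
        simpa using this
      · filter_upwards [self_mem_nhdsWithin] with x hx
        have hx' : (0:ℝ) < x := hx
        have h1 : (0:ℝ) < α * x := mul_pos hα hx'
        exact mem_Ioi.mpr (by positivity)
    have := (tendsto_inv_nhdsGT_zero.comp hg).const_mul_atTop hr
    simpa [div_eq_mul_inv, Function.comp] using this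
  have T2 : Tendsto (fun δ : ℝ => erf (r / (2 * Real.sqrt (α * δ)))) (nhdsWithin 0 (Ioi 0))
      (nhds 1) := tendsto_erf_atTop.comp T2a
  have T1 : Tendsto (fun δ : ℝ => r/(2*α^2) + δ/(α*r)) (nhdsWithin 0 (Ioi 0))
      (nhds (r/(2*α^2))) := by
    have hc : Continuous (fun δ : ℝ => r/(2*α^2) + δ/(α*r)) := by continuity
    have := (hc.tendsto 0).mono_left (nhdsWithin_le_nhds (s := Ioi 0))
    simpa using this
  have T3a : Tendsto (fun δ : ℝ => Real.sqrt δ / Real.sqrt (π*α^3)) (nhdsWithin 0 (Ioi 0))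
      (nhds 0) := by
    have hc : Continuous (fun δ : ℝ => Real.sqrt δ / Real.sqrt (π*α^3)) :=
      Real.continuous_sqrt.div_const _
    have := (hc.tendsto 0).mono_left (nhdsWithin_le_nhds (s := Ioi 0))
    simpa using this
  have T3b : Tendsto (fun δ : ℝ => Real.exp (-r^2/(4*α*δ))) (nhdsWithin 0 (Ioi 0)) (nhds 0) := by
    have h1 : Tendsto (fun δ : ℝ => -r^2/(4*α*δ)) (nhdsWithin 0 (Ioi 0)) atBot := by
      have h2 : Tendsto (fun δ : ℝ => r^2/(4*α) * δ⁻¹) (nhdsWithin 0 (Ioi 0)) atTop :=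
        tendsto_inv_nhdsGT_zero.const_mul_atTop (by positivity)
      have h3 := tendsto_neg_atTop_atBot.comp h2
      apply h3.congr
      intro x
      rcases eq_or_ne x 0 with hx | hx
      · simp [hx]
      · rw [Function.comp_apply]; field_simp
    exact Real.tendsto_exp_atBot.comp h1
  have hmain := ((T1.mul T2).add (T3a.mul T3b)).const_mul (1/(4*π))
  have hval : (1/(4*π)) * ((r/(2*α^2)) * 1 + 0 * 0) = r / (8 * π * α^2) := by
    field_simp
    ring_nf
  rw [hval] at hmain
  apply hmain.congr'
  filter_upwards [self_mem_nhdsWithin] with x hx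
  have hx0 : x ≠ 0 := ne_of_gt hx
  simp [Gdtdt, hx0]

lemma Gdtdt_continuousOn {α r : ℝ} (hα : 0 < α) (hr : 0 < r) :
    ContinuousOn (Gdtdt α r) (Ici 0) := by
  intro x hx
  rcases eq_or_lt_of_le (mem_Ici.mp hx) with hx0 | hx0
  · subst hx0
    rw [ContinuousWithinAt]
    have h0 : Ici (0:ℝ) = {0} ∪ Ioi 0 := by
      ext y; simp [le_iff_lt_or_eq, or_comm, eq_comm]
    rw [h0, nhdsWithin_union, nhdsWithin_singleton]
    rw [Gdtdt_zero]
    refine Tendsto.sup ?_ ?_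
    · rw [tendsto_pure_left]
      intro s hs
      simpa [Gdtdt_zero] using mem_of_mem_nhds hs
    · exact Gdtdt_tendsto_zero hα hr
  · exact ((Gdtdt_hasDerivAt hα hr hx0).continuousAt).continuousWithinAt

lemma Gdt_abs_le {α r : ℝ} (hα : 0 < α) (hr : 0 < r) (δ : ℝ) :
    |Gdt α r δ| ≤ 1/(4*π*α*r) := by
  have hπ : (0:ℝ) < π := Real.pi_pos
  have harg : 0 ≤ r / (2 * Real.sqrt (α * δ)) := by positivity
  have h1 : 0 ≤ erf (r / (2 * Real.sqrt (α * δ))) := erf_nonneg harg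
  have h2 : erf (r / (2 * Real.sqrt (α * δ))) ≤ 1 := erf_le_one harg
  rw [Gdt, abs_mul, abs_of_pos (by positivity : (0:ℝ) < 1/(4*π*α*r)), abs_of_nonneg h1]
  calc 1/(4*π*α*r) * erf (r / (2 * Real.sqrt (α * δ)))
      ≤ 1/(4*π*α*r) * 1 := by
        exact mul_le_mul_of_nonneg_left h2 (by positivity)
    _ = 1/(4*π*α*r) := mul_one _

lemma Gdt_continuousOn {α r : ℝ} (hα : 0 < α) (hr : 0 < r) :
    ContinuousOn (Gdt α r) (Ioi 0) := by
  intro x hx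
  exact ((Gdt_hasDerivAt hα hr hx).continuousAt).continuousWithinAt

lemma K_continuousOn {α r : ℝ} (hα : 0 < α) :
    ContinuousOn (fun s : ℝ => (4*π*α*s) ^ (-(3:ℝ)/2) * Real.exp (-r^2/(4*α*s))) (Ioi 0) := by
  intro s hs
  have hs0 : (0:ℝ) < s := hs
  have h1 : ContinuousAt (fun s : ℝ => (4*π*α*s) ^ (-(3:ℝ)/2)) s := by
    have hbase : ContinuousAt (fun s : ℝ => 4*π*α*s) s := by fun_prop
    exact (Real.continuousAt_rpow_const _ _ (Or.inl (by positivity))).comp hbase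
  have h2 : ContinuousAt (fun s : ℝ => Real.exp (-r^2/(4*α*s))) s := by
    have hd : ContinuousAt (fun s : ℝ => -r^2/(4*α*s)) s :=
      ContinuousAt.div (by fun_prop) (by fun_prop) (by positivity)
    exact Real.continuous_exp.continuousAt.comp hd
  exact (h1.mul h2).continuousWithinAt

lemma inner_eq {α r h t : ℝ} (hα : 0 < α) (hr : 0 < r) (hh : 0 < h) (ht : h < t) :
    ∫ τ in (0:ℝ)..h, (4*π*α*(t-τ)) ^ (-(3:ℝ)/2) * Real.exp (-r^2/(4*α*(t-τ)))
      = Gdt α r (t-h) - Gdt α r t := by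
  have hth : 0 < t - h := by linarith
  have ht0 : 0 < t := by linarith
  rw [intervalIntegral.integral_comp_sub_left
    (fun s => (4*π*α*s) ^ (-(3:ℝ)/2) * Real.exp (-r^2/(4*α*s))) t]
  rw [sub_zero]
  have huIcc : uIcc (t-h) t = Icc (t-h) t := uIcc_of_le (by linarith)
  have hsub : uIcc (t-h) t ⊆ Ioi 0 := by
    rw [huIcc]; intro x hx; exact lt_of_lt_of_le hth hx.1
  have hint : IntervalIntegrable
      (fun s : ℝ => (4*π*α*s) ^ (-(3:ℝ)/2) * Real.exp (-r^2/(4*α*s))) volume (t-h) t :=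
    ((K_continuousOn hα).mono hsub).intervalIntegrable
  have hderiv : ∀ x ∈ uIcc (t-h) t, HasDerivAt (fun s => -Gdt α r s)
      ((4*π*α*x) ^ (-(3:ℝ)/2) * Real.exp (-r^2/(4*α*x))) x := by
    intro x hx
    have hx0 : 0 < x := hsub hx
    have := (Gdt_hasDerivAt hα hr hx0).neg; rw [neg_neg] at this; exact this
  rw [intervalIntegral.integral_eq_sub_of_hasDerivAt hderiv hint]
  ring

theorem stmt14 (α r h : ℝ) (hα : 0 < α) (hr : 0 < r) (hh : 0 < h) (d : ℕ) (hd : 1 ≤ d) :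
    ∫ t in (d * h : ℝ)..((d + 1 : ℝ) * h),
        ∫ τ in (0:ℝ)..h,
          (4 * π * α * (t - τ)) ^ (-(3:ℝ)/2) * Real.exp (-r^2 / (4 * α * (t - τ)))
      = 2 * Gdtdt α r (d * h) - Gdtdt α r ((d + 1 : ℝ) * h) - Gdtdt α r ((d - 1 : ℝ) * h) := by
  have hπ := Real.pi_pos
  have hd' : (1:ℝ) ≤ (d:ℝ) := by exact_mod_cast hd
  set a : ℝ := (d:ℝ) * h with ha
  set b : ℝ := ((d:ℝ) + 1) * h with hb
  have hab : a < b := by rw [ha, hb]; nlinarith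
  have hha : h ≤ a := by rw [ha]; nlinarith
  have ha0 : 0 < a := lt_of_lt_of_le hh hha
  have h1 : (∫ t in a..b, ∫ τ in (0:ℝ)..h,
        (4 * π * α * (t - τ)) ^ (-(3:ℝ)/2) * Real.exp (-r^2 / (4 * α * (t - τ))))
      = ∫ t in a..b, (Gdt α r (t-h) - Gdt α r t) := by
    apply intervalIntegral.integral_congr_ae
    apply Filter.Eventually.of_forall
    intro x hx
    rw [uIoc_of_le hab.le] at hx
    exact inner_eq hα hr hh (lt_of_le_of_lt hha hx.1)
  have hFint : IntervalIntegrable (fun t => Gdt α r (t-h) - Gdt α r t) volume a b := by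
    rw [intervalIntegrable_iff_integrableOn_Ioc_of_le hab.le]
    apply Measure.integrableOn_of_bounded (M := 1/(4*π*α*r) + 1/(4*π*α*r))
    · exact (measure_Ioc_lt_top).ne
    · have hGdtm : Measurable (Gdt α r) := by
        apply Measurable.const_mul
        apply erf_continuous.measurable.comp
        apply Measurable.div measurable_const
        exact (by continuity : Continuous fun δ : ℝ => 2 * Real.sqrt (α * δ)).measurable
      exact ((hGdtm.comp (measurable_id.sub measurable_const)).sub hGdtm).aestronglyMeasurable
    · apply Filter.Eventually.of_forall
      intro x
      calc ‖Gdt α r (x-h) - Gdt α r x‖ ≤ |Gdt α r (x-h)| + |Gdt α r x| := abs_sub _ _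
        _ ≤ 1/(4*π*α*r) + 1/(4*π*α*r) := add_le_add (Gdt_abs_le hα hr _) (Gdt_abs_le hα hr _)
  have hcontH : ContinuousOn (fun t => Gdtdt α r (t-h) - Gdtdt α r t) (Icc a b) := by
    apply ContinuousOn.sub
    · apply (Gdtdt_continuousOn hα hr).comp (continuous_sub_right h).continuousOn
      intro x hx
      simp only [mem_Icc] at hx
      exact mem_Ici.mpr (by show (0:ℝ) ≤ x - h; linarith [hx.1])
    · refine (Gdtdt_continuousOn hα hr).mono (fun x hx => ?_)
      simp only [mem_Icc] at hx
      exact mem_Ici.mpr (by linarith [hx.1])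
  have hderiv : ∀ x ∈ Ioo a b, HasDerivWithinAt (fun t => Gdtdt α r (t-h) - Gdtdt α r t)
      (Gdt α r (x-h) - Gdt α r x) (Ioi x) x := by
    intro x hx
    have hx1 : 0 < x - h := by have := hx.1; linarith
    have hx2 : 0 < x := by have := hx.1; linarith
    have hc := ((Gdtdt_hasDerivAt hα hr hx1).comp x
      ((hasDerivAt_id x).sub_const h)).sub (Gdtdt_hasDerivAt hα hr hx2)
    have : HasDerivAt (fun t => Gdtdt α r (t-h) - Gdtdt α r t)
        (Gdt α r (x-h) - Gdt α r x) x := by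
      rw [mul_one] at hc; exact hc
    exact this.hasDerivWithinAt
  rw [h1, intervalIntegral.integral_eq_sub_of_hasDeriv_right_of_le hab.le hcontH hderiv hFint]
  have e1 : b - h = (d:ℝ) * h := by rw [hb]; ring
  have e2 : a - h = ((d:ℝ) - 1) * h := by rw [ha]; ring
  rw [e1, e2, ha, hb]
  ring
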